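/- The absolutely closed convex hull of an L-Dunford-Pettis set in the dual X' of a Banach space X is an L-Dunford-Pettis set. -/

import Mathlib

open Filter Topology Metric

noncomputable section

instance : Fact ((1:ENNReal) ≤ ⊤) := ⟨le_top⟩

/-- A sequence is weakly null if every continuous linear functional sends it to a null
sequence. -/
def WeaklyNull {X : Type*} [NormedAddCommGroup X] [NormedSpace ℝ X] (x : ℕ → X) : Prop :=
  ∀ f : X →L[ℝ] ℝ, Tendsto (fun n => f (x n)) atTop (𝓝 0)

/-- A sequence of functionals is weak*-null if it tends to zero pointwise. -/
def WeakStarNull {X : Type*} [NormedAddCommGroup X] [NormedSpace ℝ X]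
    (f : ℕ → X →L[ℝ] ℝ) : Prop :=
  ∀ x : X, Tendsto (fun n => f n x) atTop (𝓝 0)

/-- A norm bounded set is a Dunford-Pettis set if every weakly null sequence of functionals
converges to zero uniformly on it. -/
def IsDPSet {X : Type*} [NormedAddCommGroup X] [NormedSpace ℝ X] (A : Set X) : Prop :=
  Bornology.IsBounded A ∧
  ∀ f : ℕ → X →L[ℝ] ℝ, WeaklyNull f →
    Tendsto (fun n => ⨆ x : A, |f n (x : X)|) atTop (𝓝 0)

/-- A norm bounded subset of the dual is an L-set if every weakly null sequence in `X`
converges to zero uniformly on it. -/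
def IsLSet {X : Type*} [NormedAddCommGroup X] [NormedSpace ℝ X]
    (A : Set (X →L[ℝ] ℝ)) : Prop :=
  Bornology.IsBounded A ∧
  ∀ x : ℕ → X, WeaklyNull x →
    Tendsto (fun n => ⨆ f : A, |(f : X →L[ℝ] ℝ) (x n)|) atTop (𝓝 0)

/-- A norm bounded subset of the dual is an L-Dunford-Pettis set if every weakly null
sequence in `X` which is a Dunford-Pettis set converges to zero uniformly on it. -/
def IsLDPSet {X : Type*} [NormedAddCommGroup X] [NormedSpace ℝ X]
    (A : Set (X →L[ℝ] ℝ)) : Prop :=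
  Bornology.IsBounded A ∧
  ∀ x : ℕ → X, WeaklyNull x → IsDPSet (Set.range x) →
    Tendsto (fun n => ⨆ f : A, |(f : X →L[ℝ] ℝ) (x n)|) atTop (𝓝 0)

/-- A set is relatively weakly compact if its closure in the weak topology is compact. -/
def RelWeaklyCompact {X : Type*} [NormedAddCommGroup X] [NormedSpace ℝ X]
    (A : Set X) : Prop :=
  IsCompact (closure ((toWeakSpace ℝ X) '' A))

/-- The relatively compact Dunford-Pettis property: every Dunford-Pettis set is
relatively norm compact. -/
def HasDPrcP (X : Type*) [NormedAddCommGroup X] [NormedSpace ℝ X] : Prop :=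
  ∀ A : Set X, IsDPSet A → IsCompact (closure A)

/-- An operator is Dunford-Pettis completely continuous if it maps weakly null sequences
that are Dunford-Pettis sets to norm null sequences. -/
def IsDPcc {X Y : Type*} [NormedAddCommGroup X] [NormedSpace ℝ X]
    [NormedAddCommGroup Y] [NormedSpace ℝ Y] (T : X →L[ℝ] Y) : Prop :=
  ∀ x : ℕ → X, WeaklyNull x → IsDPSet (Set.range x) →
    Tendsto (fun n => ‖T (x n)‖) atTop (𝓝 0)

/-- An operator is weakly compact if the image of the closed unit ball is relatively
weakly compact. -/
def IsWeaklyCompactOp {X Y : Type*} [NormedAddCommGroup X] [NormedSpace ℝ X]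
    [NormedAddCommGroup Y] [NormedSpace ℝ Y] (T : X →L[ℝ] Y) : Prop :=
  RelWeaklyCompact (T '' closedBall 0 1)

/-- The L-Dunford-Pettis property: every L-Dunford-Pettis set in the dual is relatively
weakly compact. -/
def HasLDPProperty (X : Type*) [NormedAddCommGroup X] [NormedSpace ℝ X] : Prop :=
  ∀ A : Set (X →L[ℝ] ℝ), IsLDPSet A → RelWeaklyCompact A

/-- The Dunford-Pettis property: every relatively weakly compact set is a
Dunford-Pettis set. -/
def HasDPProperty (X : Type*) [NormedAddCommGroup X] [NormedSpace ℝ X] : Prop :=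
  ∀ A : Set X, RelWeaklyCompact A → IsDPSet A

/-- Grothendieck space: every weak*-null sequence in the dual is weakly null. -/
def IsGrothendieck (X : Type*) [NormedAddCommGroup X] [NormedSpace ℝ X] : Prop :=
  ∀ f : ℕ → X →L[ℝ] ℝ, WeakStarNull f → WeaklyNull f

/-- The space `ℓ∞` of bounded real sequences. -/
abbrev ellInfty : Type := lp (fun _ : ℕ => ℝ) ⊤

/-- The set of absolutely convex combinations of elements of `A`. -/
def absConvexCombos {X : Type*} [NormedAddCommGroup X] [NormedSpace ℝ X] (A : Set X) :
    Set X :=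
  {y | ∃ (n : ℕ) (v : Fin n → X) (lam : Fin n → ℝ),
    (∀ i, v i ∈ A) ∧ (∑ i, |lam i|) ≤ 1 ∧ y = ∑ i, lam i • v i}

theorem stmt4 {X : Type*} [NormedAddCommGroup X] [NormedSpace ℝ X] [CompleteSpace X]
    (A : Set (X →L[ℝ] ℝ)) (hA : IsLDPSet A) :
    IsLDPSet (closure (absConvexCombos A)) := by
  obtain ⟨hAb, hAlim⟩ := hA
  obtain ⟨M, hMball⟩ := hAb.subset_closedBall 0
  have hM0 : 0 ≤ max M 0 := le_max_right _ _
  have hM : ∀ f ∈ A, ‖f‖ ≤ max M 0 := by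
    intro f hf
    have := hMball hf
    rw [mem_closedBall_zero_iff] at this
    exact this.trans (le_max_left _ _)
  have hconv : ∀ y ∈ absConvexCombos A, ‖y‖ ≤ max M 0 := by
    rintro y ⟨n, v, lam, hv, hsum, rfl⟩
    calc ‖∑ i, lam i • v i‖ ≤ ∑ i, ‖lam i • v i‖ := norm_sum_le _ _
      _ = ∑ i, |lam i| * ‖v i‖ := Finset.sum_congr rfl fun i _ => (norm_smul (lam i) (v i)).trans (by rw [Real.norm_eq_abs])
      _ ≤ ∑ i, |lam i| * max M 0 := Finset.sum_le_sum fun i _ =>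
          mul_le_mul_of_nonneg_left (hM _ (hv i)) (abs_nonneg _)
      _ = (∑ i, |lam i|) * max M 0 := (Finset.sum_mul _ _ _).symm
      _ ≤ 1 * max M 0 := mul_le_mul_of_nonneg_right hsum hM0
      _ = max M 0 := one_mul _
  have hsub : closure (absConvexCombos A) ⊆ closedBall 0 (max M 0) := by
    refine closure_minimal ?_ isClosed_closedBall
    intro y hy
    rw [mem_closedBall_zero_iff]
    exact hconv y hy
  constructor
  · exact (isBounded_closedBall).subset hsub
  · intro x hx hDP
    have hS := hAlim x hx hDP
    set S : ℕ → ℝ := fun n => ⨆ f : A, |(f : X →L[ℝ] ℝ) (x n)| with hSdef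
    have hS0 : ∀ n, 0 ≤ S n := fun n => Real.iSup_nonneg fun f => abs_nonneg _
    have hbdd : ∀ n, BddAbove (Set.range fun f : A => |(f : X →L[ℝ] ℝ) (x n)|) := by
      intro n
      refine ⟨max M 0 * ‖x n‖, ?_⟩
      rintro _ ⟨f, rfl⟩
      calc |(f : X →L[ℝ] ℝ) (x n)| ≤ ‖(f : X →L[ℝ] ℝ)‖ * ‖x n‖ :=
            (f : X →L[ℝ] ℝ).le_opNorm (x n)
        _ ≤ max M 0 * ‖x n‖ :=
            mul_le_mul_of_nonneg_right (hM _ f.2) (norm_nonneg _)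
    have hptA : ∀ n, ∀ g ∈ absConvexCombos A, |g (x n)| ≤ S n := by
      rintro n g ⟨m, v, lam, hv, hsum, rfl⟩
      calc |(∑ i, lam i • v i) (x n)| = |∑ i, lam i * (v i) (x n)| := by simp
        _ ≤ ∑ i, |lam i * (v i) (x n)| := Finset.abs_sum_le_sum_abs _ _
        _ = ∑ i, |lam i| * |(v i) (x n)| := by simp [abs_mul]
        _ ≤ ∑ i, |lam i| * S n := Finset.sum_le_sum fun i _ =>
            mul_le_mul_of_nonneg_left
              (le_ciSup (hbdd n) (⟨v i, hv i⟩ : A)) (abs_nonneg _)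
        _ = (∑ i, |lam i|) * S n := (Finset.sum_mul _ _ _).symm
        _ ≤ 1 * S n := mul_le_mul_of_nonneg_right hsum (hS0 n)
        _ = S n := one_mul _
    have hpt : ∀ n, ∀ g ∈ closure (absConvexCombos A), |g (x n)| ≤ S n := by
      intro n g hg
      have hc : IsClosed {g : X →L[ℝ] ℝ | |g (x n)| ≤ S n} :=
        isClosed_le (continuous_abs.comp
          (ContinuousLinearMap.apply ℝ ℝ (x n)).continuous) continuous_const
      exact hc.closure_subset_iff.2 (hptA n) hg
    refine tendsto_of_tendsto_of_tendsto_of_le_of_le tendsto_const_nhds hS ?_ ?_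
    · intro n
      exact Real.iSup_nonneg fun g => abs_nonneg _
    · intro n
      exact Real.iSup_le (fun g => hpt n g g.2) (hS0 n)
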